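/- Every ANR_{B0}-resolution p : X → X of a topological space X over B0 is an ANR_{B0}-expansion, i.e. p satisfies conditions (E1) and (E2). -/

import Mathlib

open Set Topology TopologicalSpace unitInterval

universe u

/-- `f` is a fiber preserving (f.p.) map from `(X, πX)` to `(Y, πY)` over `B0`. -/
def IsFPMap {B0 X Y : Type u} [TopologicalSpace B0] [TopologicalSpace X] [TopologicalSpace Y]
    (πX : X → B0) (πY : Y → B0) (f : X → Y) : Prop :=
  Continuous f ∧ ∀ x, πY (f x) = πX x

/-- Two f.p. maps are f.p. homotopic (homotopic over `B0`). -/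
def FPHomotopic {B0 X Y : Type u} [TopologicalSpace B0] [TopologicalSpace X] [TopologicalSpace Y]
    (πX : X → B0) (πY : Y → B0) (f g : X → Y) : Prop :=
  ∃ H : X × unitInterval → Y, Continuous H ∧
    (∀ x, H (x, 0) = f x) ∧ (∀ x, H (x, 1) = g x) ∧
    ∀ x t, πY (H (x, t)) = πX x

/-- A metrizable space `(Y, πY)` over `B0` is an absolute neighbourhood retract over `B0`:
for every closed f.p. embedding into a metrizable space over `B0` there is a neighbourhood of the
image and an f.p. retraction of that neighbourhood onto the image. -/
def IsFiberANR (B0 : Type u) [TopologicalSpace B0] (Y : Type u) [TopologicalSpace Y]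
    (πY : Y → B0) : Prop :=
  MetrizableSpace Y ∧ Continuous πY ∧
  ∀ (X : Type u) (_ : TopologicalSpace X), MetrizableSpace X →
    ∀ πX : X → B0, Continuous πX →
    ∀ i : Y → X, IsClosedEmbedding i → (∀ y, πX (i y) = πY y) →
    ∃ U : Set X, U ∈ nhdsSet (Set.range i) ∧
    ∃ r : U → X, Continuous r ∧ (∀ u : U, r u ∈ Set.range i) ∧
      (∀ u : U, πX (r u) = πX u) ∧ ∀ u : U, (u : X) ∈ Set.range i → r u = u

/-- A metrizable space `(Y, πY)` over `B0` is an absolute neighbourhood extensor over `B0`. -/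
def IsFiberANE (B0 : Type u) [TopologicalSpace B0] (Y : Type u) [TopologicalSpace Y]
    (πY : Y → B0) : Prop :=
  MetrizableSpace Y ∧ Continuous πY ∧
  ∀ (X : Type u) (_ : TopologicalSpace X), MetrizableSpace X →
    ∀ πX : X → B0, Continuous πX →
    ∀ A : Set X, IsClosed A →
    ∀ f : A → Y, Continuous f → (∀ a : A, πY (f a) = πX a) →
    ∃ U : Set X, U ∈ nhdsSet A ∧
    ∃ g : U → Y, Continuous g ∧ (∀ u : U, πY (g u) = πX u) ∧
      ∀ (a : X) (ha : a ∈ A) (hu : a ∈ U), g ⟨a, hu⟩ = f ⟨a, ha⟩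

/-- An open cover of a topological space. -/
def IsOpenCover {Y : Type u} [TopologicalSpace Y] (𝒰 : Set (Set Y)) : Prop :=
  (∀ V ∈ 𝒰, IsOpen V) ∧ ⋃₀ 𝒰 = Set.univ

/-- Two maps are `𝒰`-near. -/
def UNear {X Y : Type u} (𝒰 : Set (Set Y)) (f g : X → Y) : Prop :=
  ∀ x, ∃ V ∈ 𝒰, f x ∈ V ∧ g x ∈ V

/-- The (topological) weight of a space: the least cardinality of a basis of its topology. -/
noncomputable def tweight (X : Type u) [TopologicalSpace X] : Cardinal.{u} :=
  sInf {c | ∃ B : Set (Set X), IsTopologicalBasis B ∧ Cardinal.mk B = c}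

/-- An inverse system in `Top_{B0}`: a directed set of indices, spaces over `B0` and f.p.
bonding maps. -/
structure FibInvSys (B0 : Type u) [TopologicalSpace B0] : Type (u + 1) where
  Idx : Type u
  le : Idx → Idx → Prop
  le_refl : ∀ a, le a a
  le_trans : ∀ a b c, le a b → le b c → le a c
  directed : ∀ a b, ∃ c, le a c ∧ le b c
  obj : Idx → Type u
  topInst : ∀ a, TopologicalSpace (obj a)
  proj : ∀ a, obj a → B0
  proj_cont : ∀ a, @Continuous _ _ (topInst a) _ (proj a)
  bond : ∀ a a', le a a' → obj a' → obj a
  bond_cont : ∀ a a' (h : le a a'), @Continuous _ _ (topInst a') (topInst a) (bond a a' h)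
  bond_fp : ∀ a a' (h : le a a') (x : obj a'), proj a (bond a a' h x) = proj a' x
  bond_id : ∀ a (x : obj a), bond a a (le_refl a) x = x
  bond_comp : ∀ a a' a'' (h : le a a') (h' : le a' a'') (x : obj a''),
    bond a a' h (bond a' a'' h' x) = bond a a'' (le_trans a a' a'' h h') x

attribute [instance] FibInvSys.topInst

/-- A morphism from a space `(X, πX)` over `B0` to an inverse system in `Top_{B0}`. -/
structure FibMapToSys {B0 : Type u} [TopologicalSpace B0] (X : Type u) [TopologicalSpace X]
    (πX : X → B0) (S : FibInvSys B0) where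
  maps : ∀ a : S.Idx, X → S.obj a
  cont : ∀ a, Continuous (maps a)
  fp : ∀ a x, S.proj a (maps a x) = πX x
  comm : ∀ a a' (h : S.le a a') (x : X), S.bond a a' h (maps a' x) = maps a x

section Conditions

variable {B0 : Type u} [TopologicalSpace B0] (X : Type u) [TopologicalSpace X]
  (πX : X → B0) (S : FibInvSys B0)

/-- Condition (R1) of a resolution over `B0`. -/
def CondR1 (p : FibMapToSys X πX S) : Prop :=
  ∀ (P : Type u) (_ : TopologicalSpace P) (πP : P → B0), IsFiberANR B0 P πP →
    ∀ 𝒰 : Set (Set P), IsOpenCover 𝒰 →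
    ∀ h : X → P, IsFPMap πX πP h →
    ∃ (a : S.Idx) (f : S.obj a → P), IsFPMap (S.proj a) πP f ∧
      UNear 𝒰 h fun x => f (p.maps a x)

/-- Condition (R2) of a resolution over `B0`. -/
def CondR2 (p : FibMapToSys X πX S) : Prop :=
  ∀ (P : Type u) (_ : TopologicalSpace P) (πP : P → B0), IsFiberANR B0 P πP →
    ∀ 𝒰 : Set (Set P), IsOpenCover 𝒰 →
    ∃ 𝒰' : Set (Set P), IsOpenCover 𝒰' ∧
      ∀ (a : S.Idx) (f f' : S.obj a → P), IsFPMap (S.proj a) πP f → IsFPMap (S.proj a) πP f' →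
        UNear 𝒰' (fun x => f (p.maps a x)) (fun x => f' (p.maps a x)) →
        ∃ (a' : S.Idx) (h : S.le a a'),
          UNear 𝒰 (fun y => f (S.bond a a' h y)) fun y => f' (S.bond a a' h y)

/-- `p` is a resolution over `B0`. -/
def IsFibResolution (p : FibMapToSys X πX S) : Prop :=
  CondR1 X πX S p ∧ CondR2 X πX S p

/-- Condition (E1) of an expansion over `B0`. -/
def CondE1 (p : FibMapToSys X πX S) : Prop :=
  ∀ (P : Type u) (_ : TopologicalSpace P) (πP : P → B0), IsFiberANR B0 P πP →
    ∀ f : X → P, IsFPMap πX πP f →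
    ∃ (a : S.Idx) (h : S.obj a → P), IsFPMap (S.proj a) πP h ∧
      FPHomotopic πX πP (fun x => h (p.maps a x)) f

/-- Condition (E2) of an expansion over `B0`. -/
def CondE2 (p : FibMapToSys X πX S) : Prop :=
  ∀ (P : Type u) (_ : TopologicalSpace P) (πP : P → B0), IsFiberANR B0 P πP →
    ∀ (a : S.Idx) (f f' : S.obj a → P), IsFPMap (S.proj a) πP f → IsFPMap (S.proj a) πP f' →
      FPHomotopic πX πP (fun x => f (p.maps a x)) (fun x => f' (p.maps a x)) →
      ∃ (a' : S.Idx) (h : S.le a a'),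
        FPHomotopic (S.proj a') πP (fun y => f (S.bond a a' h y)) fun y => f' (S.bond a a' h y)

/-- Two f.p. homotopies `S, T : X × I → P` are f.p. homotopic rel `X × ∂I`. -/
def FPHomotopicRelEnds {P : Type u} [TopologicalSpace P] (πP : P → B0)
    (S T : X × unitInterval → P) : Prop :=
  ∃ G : (X × unitInterval) × unitInterval → P, Continuous G ∧
    (∀ z, G (z, 0) = S z) ∧ (∀ z, G (z, 1) = T z) ∧
    (∀ z s, πP (G (z, s)) = πX z.1) ∧
    (∀ x s, G ((x, 0), s) = S (x, 0)) ∧ ∀ x s, G ((x, 1), s) = S (x, 1)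

/-- Condition (SE2) of a strong expansion over `B0`. -/
def CondSE2 (p : FibMapToSys X πX S) : Prop :=
  ∀ (P : Type u) (_ : TopologicalSpace P) (πP : P → B0), IsFiberANR B0 P πP →
    ∀ (a : S.Idx) (f0 f1 : S.obj a → P), IsFPMap (S.proj a) πP f0 → IsFPMap (S.proj a) πP f1 →
    ∀ Sh : X × unitInterval → P, Continuous Sh → (∀ x t, πP (Sh (x, t)) = πX x) →
      (∀ x, Sh (x, 0) = f0 (p.maps a x)) → (∀ x, Sh (x, 1) = f1 (p.maps a x)) →
      ∃ (a' : S.Idx) (h : S.le a a') (H : S.obj a' × unitInterval → P),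
        Continuous H ∧ (∀ z t, πP (H (z, t)) = S.proj a' z) ∧
        (∀ z, H (z, 0) = f0 (S.bond a a' h z)) ∧
        (∀ z, H (z, 1) = f1 (S.bond a a' h z)) ∧
        FPHomotopicRelEnds X πX πP Sh fun zt => H (p.maps a' zt.1, zt.2)

/-- `p` is a strong expansion over `B0`. -/
def IsFibStrongExpansion (p : FibMapToSys X πX S) : Prop :=
  CondE1 X πX S p ∧ CondSE2 X πX S p

end Conditions


section Kuratowski
variable {P : Type u} [MetricSpace P] [Nonempty P]

/-- The Kuratowski embedding of a metric space into bounded continuous functions. -/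
noncomputable def kurJ (P : Type u) [MetricSpace P] [Nonempty P] :
    P → BoundedContinuousFunction P ℝ := fun x =>
  BoundedContinuousFunction.mkOfBound
    ⟨fun y => dist x y - dist (Classical.arbitrary P) y, by fun_prop⟩
    (2 * dist x (Classical.arbitrary P)) (by
      intro y z
      have h1 : |dist x y - dist (Classical.arbitrary P) y| ≤ dist x (Classical.arbitrary P) :=
        abs_dist_sub_le _ _ _
      have h2 : |dist x z - dist (Classical.arbitrary P) z| ≤ dist x (Classical.arbitrary P) :=
        abs_dist_sub_le _ _ _
      rw [Real.dist_eq]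
      calc |(dist x y - dist (Classical.arbitrary P) y) - (dist x z - dist (Classical.arbitrary P) z)|
          ≤ |dist x y - dist (Classical.arbitrary P) y| + |dist x z - dist (Classical.arbitrary P) z| := abs_sub _ _
        _ ≤ _ := by linarith)

lemma kurJ_apply (x y : P) : kurJ P x y = dist x y - dist (Classical.arbitrary P) y := rfl

lemma kurJ_isometry : Isometry (kurJ P) := by
  refine Isometry.of_dist_eq fun x x' => le_antisymm ?_ ?_
  · refine (BoundedContinuousFunction.dist_le dist_nonneg).2 fun y => ?_
    simp only [kurJ_apply, Real.dist_eq]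
    have : dist x y - dist (Classical.arbitrary P) y - (dist x' y - dist (Classical.arbitrary P) y)
        = dist x y - dist x' y := by ring
    rw [this]
    exact abs_dist_sub_le _ _ _
  · have := BoundedContinuousFunction.dist_coe_le_dist (f := kurJ P x) (g := kurJ P x') x'
    simp only [kurJ_apply, Real.dist_eq] at this
    calc dist x x' = |dist x x' - dist (Classical.arbitrary P) x' -
        (dist x' x' - dist (Classical.arbitrary P) x')| := by
          rw [dist_self]; rw [abs_of_nonneg] <;> ring_nf
          · exact dist_nonneg
      _ ≤ _ := this

/-- Kuratowski–Wojdysławski: the image of the Kuratowski embedding is closed in its convex hull. -/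
lemma kurJ_closed_in_hull {w : BoundedContinuousFunction P ℝ}
    (hw : w ∈ convexHull ℝ (Set.range (kurJ P))) (hcl : w ∈ closure (Set.range (kurJ P))) :
    w ∈ Set.range (kurJ P) := by
  rw [convexHull_eq] at hw
  obtain ⟨ι, t, ws, z, hw0, hw1, hz, rfl⟩ := hw
  -- pick an index with positive weight
  have hpos : ∃ i ∈ t, 0 < ws i := by
    by_contra h
    push_neg at h
    have : ∑ i ∈ t, ws i ≤ 0 := Finset.sum_nonpos fun i hi => h i hi
    rw [hw1] at this; linarith
  obtain ⟨i₀, hi₀t, hi₀⟩ := hpos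
  -- choose preimages
  have hq : ∀ i ∈ t, ∃ q : P, kurJ P q = z i := fun i hi => hz i hi
  classical
  set q : ι → P := fun i => if h : ∃ q : P, kurJ P q = z i then h.choose else Classical.arbitrary P with hqdef
  have hqz : ∀ i ∈ t, kurJ P (q i) = z i := by
    intro i hi
    simp only [hqdef, dif_pos (hq i hi)]
    exact (hq i hi).choose_spec
  set cm := t.centerMass ws z with hcm
  have hcmsum : cm = ∑ i ∈ t, ws i • z i := Finset.centerMass_eq_of_sum_1 _ _ hw1
  -- evaluation identity
  have heval : ∀ x : P, cm x - kurJ P x x = ∑ i ∈ t, ws i * dist (q i) x := by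
    intro x
    have h1 : cm x = ∑ i ∈ t, ws i * (z i x) := by
      rw [hcmsum]
      have hc := congrFun (BoundedContinuousFunction.coe_sum t (fun i => ws i • z i)) x
      rw [Finset.sum_apply] at hc
      simp only [BoundedContinuousFunction.coe_smul, smul_eq_mul] at hc
      exact hc
    have h2 : ∀ i ∈ t, (z i x : ℝ) = dist (q i) x - dist (Classical.arbitrary P) x := by
      intro i hi
      rw [← hqz i hi, kurJ_apply]
    have h3 : kurJ P x x = - dist (Classical.arbitrary P) x := by
      rw [kurJ_apply, dist_self]; ring
    rw [h1, h3, Finset.sum_congr rfl fun i hi => by rw [h2 i hi]]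
    have h4 : ∑ i ∈ t, ws i * (dist (q i) x - dist (Classical.arbitrary P) x)
        = ∑ i ∈ t, ws i * dist (q i) x - (∑ i ∈ t, ws i) * dist (Classical.arbitrary P) x := by
      simp only [mul_sub]
      rw [Finset.sum_sub_distrib, Finset.sum_mul]
    rw [h4, hw1]; ring
  -- conclude cm = kurJ (q i₀)
  have hkey : ∀ ε > (0:ℝ), dist cm (kurJ P (q i₀)) ≤ 2 * ε := by
    intro ε hε
    have hε' : 0 < ws i₀ * ε := mul_pos hi₀ hε
    obtain ⟨v, hv, hvd⟩ := Metric.mem_closure_iff.1 hcl (ws i₀ * ε) hε'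
    obtain ⟨x, rfl⟩ := hv
    have hevx := heval x
    have habs : |cm x - kurJ P x x| ≤ dist cm (kurJ P x) := by
      have := BoundedContinuousFunction.dist_coe_le_dist (f := cm) (g := kurJ P x) x
      rwa [Real.dist_eq] at this
    have hsum_nonneg : ∀ i ∈ t, 0 ≤ ws i * dist (q i) x :=
      fun i hi => mul_nonneg (hw0 i hi) dist_nonneg
    have hterm : ws i₀ * dist (q i₀) x ≤ ∑ i ∈ t, ws i * dist (q i) x :=
      Finset.single_le_sum hsum_nonneg hi₀t
    have hsum_lt : ∑ i ∈ t, ws i * dist (q i) x < ws i₀ * ε := by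
      calc ∑ i ∈ t, ws i * dist (q i) x = |cm x - kurJ P x x| := by
            rw [hevx, abs_of_nonneg (Finset.sum_nonneg hsum_nonneg)]
        _ ≤ dist cm (kurJ P x) := habs
        _ < ws i₀ * ε := hvd
    have hdq : dist (q i₀) x < ε := by
      by_contra h
      push_neg at h
      have : ws i₀ * ε ≤ ws i₀ * dist (q i₀) x := mul_le_mul_of_nonneg_left h (le_of_lt hi₀)
      linarith
    have hwle : ws i₀ ≤ 1 := by
      rw [← hw1]
      exact Finset.single_le_sum (fun i hi => hw0 i hi) hi₀t
    calc dist cm (kurJ P (q i₀)) ≤ dist cm (kurJ P x) + dist (kurJ P x) (kurJ P (q i₀)) :=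
          dist_triangle _ _ _
      _ ≤ ws i₀ * ε + dist x (q i₀) := by
          rw [kurJ_isometry.dist_eq]
          linarith
      _ ≤ 1 * ε + ε := by
          rw [dist_comm]
          have : ws i₀ * ε ≤ 1 * ε := mul_le_mul_of_nonneg_right hwle (le_of_lt hε)
          linarith
      _ = 2 * ε := by ring
  have : dist cm (kurJ P (q i₀)) = 0 := by
    by_contra h
    have hd : 0 < dist cm (kurJ P (q i₀)) := lt_of_le_of_ne dist_nonneg (Ne.symm h)
    have := hkey (dist cm (kurJ P (q i₀)) / 4) (by linarith)
    linarith
  exact ⟨q i₀, (eq_of_dist_eq_zero this).symm⟩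
end Kuratowski

/-- Dugundji-type extension: a continuous map from a closed subset of a metric space into a
normed real vector space extends continuously with values in the convex hull of its range. -/
theorem dugundji_ext {W : Type*} [MetricSpace W] {E : Type*} [NormedAddCommGroup E]
    [NormedSpace ℝ E] {A : Set W} (hA : IsClosed A) (hne : A.Nonempty)
    (f : A → E) (hf : Continuous f) :
    ∃ g : W → E, Continuous g ∧ (∀ a : A, g a = f a) ∧
      ∀ w, g w ∈ convexHull ℝ (Set.range f) := by
  classical
  set X' := ↥(Aᶜ) with hX'
  -- radius function
  have hrpos : ∀ x : X', 0 < Metric.infDist x.1 A :=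
    fun x => (hA.notMem_iff_infDist_pos hne).1 x.2
  set U : X' → Set X' := fun i => Subtype.val ⁻¹' Metric.ball i.1 (Metric.infDist i.1 A / 2) with hU
  have hUo : ∀ i, IsOpen (U i) := fun i => Metric.isOpen_ball.preimage continuous_subtype_val
  have hUc : (univ : Set X') ⊆ ⋃ i, U i := by
    intro x _
    exact mem_iUnion.2 ⟨x, by simp [hU, Metric.mem_ball, dist_self, half_pos (hrpos x)]⟩
  obtain ⟨ρ, hρ⟩ := PartitionOfUnity.exists_isSubordinate isClosed_univ U hUo hUc
  -- nearest points
  have hax : ∀ i : X', ∃ y ∈ A, dist i.1 y < 2 * Metric.infDist i.1 A := by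
    intro i
    exact (Metric.infDist_lt_iff hne).1 (by linarith [hrpos i])
  choose av hav1 hav2 using hax
  set a : X' → ↥A := fun i => ⟨av i, hav1 i⟩ with ha
  set G : X' → E := fun x => ∑ᶠ i, ρ i x • f (a i) with hG
  have hGc : Continuous G :=
    hρ.continuous_finsum_smul hUo (fun i => continuousOn_const)
  set g : W → E := fun w => if h : w ∈ A then f ⟨w, h⟩ else G ⟨w, h⟩ with hg
  have hga : ∀ a : A, g a = f a := by
    rintro ⟨w, hw⟩; simp [hg, dif_pos hw]
  have hGsum : ∀ x : X', G x = ∑ i ∈ ρ.finsupport x, ρ i x • f (a i) := by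
    intro x
    exact (ρ.sum_finsupport_smul_eq_finsum (fun i _ => f (a i))).symm
  have hsum1 : ∀ x : X', ∑ i ∈ ρ.finsupport x, ρ i x = 1 :=
    fun x => ρ.sum_finsupport (mem_univ x)
  -- values in convex hull
  have hmem : ∀ w, g w ∈ convexHull ℝ (Set.range f) := by
    intro w
    by_cases h : w ∈ A
    · rw [hg]; simp only [dif_pos h]
      exact subset_convexHull ℝ _ (mem_range_self _)
    · rw [hg]; simp only [dif_neg h]
      rw [hGsum ⟨w, h⟩]
      rw [← Finset.centerMass_eq_of_sum_1 _ _ (hsum1 ⟨w, h⟩)]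
      exact Finset.centerMass_mem_convexHull _ (fun i _ => ρ.nonneg i _)
        (by rw [hsum1 ⟨w, h⟩]; norm_num) (fun i _ => mem_range_self _)
  -- continuity
  refine ⟨g, continuous_iff_continuousAt.2 fun w => ?_, hga, hmem⟩
  by_cases h : w ∈ A
  · -- boundary/interior-of-A continuity via ε-δ
    rw [Metric.continuousAt_iff]
    intro ε hε
    -- continuity of f at ⟨w, h⟩
    obtain ⟨δ₁, hδ₁, hfδ⟩ := Metric.continuousAt_iff.1 (hf.continuousAt (x := ⟨w, h⟩))
      (ε / 2) (by linarith)
    refine ⟨δ₁ / 7, by linarith, fun {y} hy => ?_⟩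
    by_cases hyA : y ∈ A
    · have : dist (⟨y, hyA⟩ : A) ⟨w, h⟩ < δ₁ := by
        rw [Subtype.dist_eq]; simp only []
        calc dist y w < δ₁ / 7 := hy
          _ < δ₁ := by linarith
      have := hfδ this
      rw [hg]; simp only [dif_pos hyA, dif_pos h]
      calc dist (f ⟨y, hyA⟩) (f ⟨w, h⟩) < ε / 2 := this
        _ < ε := by linarith
    · -- y ∉ A
      set x : X' := ⟨y, hyA⟩ with hx
      have hgy : g y = G x := by rw [hg]; simp [dif_neg hyA, hx]
      have hgw : g w = f ⟨w, h⟩ := by rw [hg]; simp [dif_pos h]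
      -- every index in the finsupport has its anchor point close to w
      have hclose : ∀ i ∈ ρ.finsupport x, dist (av i) w < δ₁ := by
        intro i hi
        have hxi : x ∈ U i := by
          apply hρ i
          apply subset_closure
          exact (ρ.mem_finsupport x).1 hi
        have hdxi : dist y i.1 < Metric.infDist i.1 A / 2 := by
          have := hxi
          simp only [hU, mem_preimage, Metric.mem_ball] at this
          exact this
        have hri : Metric.infDist i.1 A ≤ dist i.1 w := Metric.infDist_le_dist_of_mem h
        have hib : Metric.infDist i.1 A < 2 * (δ₁ / 7) := by
          have h1 : dist i.1 w ≤ dist i.1 y + dist y w := dist_triangle _ _ _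
          rw [dist_comm i.1 y] at h1
          linarith
        calc dist (av i) w ≤ dist (av i) i.1 + dist i.1 y + dist y w := dist_triangle4 _ _ _ _
          _ < 2 * Metric.infDist i.1 A + Metric.infDist i.1 A / 2 + δ₁ / 7 := by
              rw [dist_comm (av i) i.1, dist_comm i.1 y]
              linarith [hav2 i]
          _ < δ₁ := by linarith
      have hfar : ∀ i ∈ ρ.finsupport x, dist (f (a i)) (f ⟨w, h⟩) < ε / 2 := by
        intro i hi
        apply hfδ
        rw [Subtype.dist_eq]
        exact hclose i hi
      rw [hgy, hgw, dist_eq_norm, hGsum x]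
      have hrw : (∑ i ∈ ρ.finsupport x, ρ i x • f (a i)) - f ⟨w, h⟩
          = ∑ i ∈ ρ.finsupport x, ρ i x • (f (a i) - f ⟨w, h⟩) := by
        simp only [smul_sub]
        rw [Finset.sum_sub_distrib, ← Finset.sum_smul, hsum1 x, one_smul]
      rw [hrw]
      calc ‖∑ i ∈ ρ.finsupport x, ρ i x • (f (a i) - f ⟨w, h⟩)‖
          ≤ ∑ i ∈ ρ.finsupport x, ‖ρ i x • (f (a i) - f ⟨w, h⟩)‖ := norm_sum_le _ _
        _ ≤ ∑ i ∈ ρ.finsupport x, ρ i x * (ε / 2) := by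
            apply Finset.sum_le_sum
            intro i hi
            rw [norm_smul, Real.norm_of_nonneg (ρ.nonneg i x)]
            exact mul_le_mul_of_nonneg_left (by
              rw [← dist_eq_norm]; exact le_of_lt (hfar i hi)) (ρ.nonneg i x)
        _ = ε / 2 := by rw [← Finset.sum_mul, hsum1 x, one_mul]
        _ < ε := by linarith
  · -- interior of the complement
    have hAco : IsOpen Aᶜ := hA.isOpen_compl
    have hcont : ContinuousOn g Aᶜ := by
      rw [continuousOn_iff_continuous_restrict]
      have : Aᶜ.domRestrict g = G := by
        funext x
        rw [hg]
        simp only [domRestrict_apply, dif_neg x.2]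
      rw [this]
      exact hGc
    exact hcont.continuousAt (hAco.mem_nhds h)

/-- A "model" of a fiber ANR: an isometric copy inside `B0 × (convex hull in a normed space)`
together with a fiberwise neighbourhood retraction. -/
structure FibModel (B0 : Type u) [TopologicalSpace B0] (P : Type u) [MetricSpace P]
    (πP : P → B0) : Type (u + 1) where
  E : Type u
  [ng : NormedAddCommGroup E]
  [ns : NormedSpace ℝ E]
  J : P → E
  isomJ : Isometry J
  closedJ : ∀ w ∈ convexHull ℝ (Set.range J), w ∈ closure (Set.range J) → w ∈ Set.range J
  O : Set (B0 × ↥(convexHull ℝ (Set.range J)))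
  openO : IsOpen O
  memO : ∀ x : P,
    ((πP x, ⟨J x, subset_convexHull ℝ _ ⟨x, rfl⟩⟩) : B0 × ↥(convexHull ℝ (Set.range J))) ∈ O
  ρ : ↥O → P
  contρ : Continuous ρ
  fpρ : ∀ z : ↥O, πP (ρ z) = z.1.1
  retρ : ∀ (x : P) (h : ((πP x, ⟨J x, subset_convexHull ℝ _ ⟨x, rfl⟩⟩) :
      B0 × ↥(convexHull ℝ (Set.range J))) ∈ O), ρ ⟨_, h⟩ = x

attribute [instance] FibModel.ng FibModel.ns

set_option synthInstance.maxHeartbeats 1000000 in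
set_option maxHeartbeats 1000000 in
/-- Every nonempty fiber ANR admits a model. -/
lemma exists_fibModel {B0 P : Type u} [TopologicalSpace B0] [MetrizableSpace B0]
    [MetricSpace P] [Nonempty P] (πP : P → B0) (hP : IsFiberANR B0 P πP) :
    Nonempty (FibModel B0 P πP) := by
  classical
  letI : MetricSpace B0 := TopologicalSpace.metrizableSpaceMetric B0
  set E := BoundedContinuousFunction P ℝ with hE
  set J : P → E := kurJ P with hJ
  set C : Set E := convexHull ℝ (Set.range J) with hC
  set M := B0 × ↥C with hM
  have hJC : ∀ x : P, J x ∈ C := fun x => subset_convexHull ℝ _ ⟨x, rfl⟩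
  set i : P → M := fun x => (πP x, ⟨J x, hJC x⟩) with hi
  have hJemb : IsEmbedding J := (kurJ_isometry).isEmbedding
  have hicont : Continuous i := by
    refine Continuous.prodMk hP.2.1 (Continuous.subtype_mk ?_ _)
    exact (kurJ_isometry).continuous
  have hiemb : IsEmbedding i := by
    have h2 : Continuous (fun m : M => (m.2.1 : E)) :=
      continuous_subtype_val.comp continuous_snd
    have : IsEmbedding ((fun m : M => (m.2.1 : E)) ∘ i) := hJemb
    exact IsEmbedding.of_comp hicont h2 this
  letI : MetricSpace M := inferInstance
  haveI : SequentialSpace M := inferInstance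
  have hiclosed : IsClosedEmbedding i := by
    refine ⟨hiemb, ?_⟩
    apply IsSeqClosed.isClosed
    rintro u m hmem hlim
    choose x hx using hmem
    have hJlim : Filter.Tendsto (fun n => J (x n)) Filter.atTop (nhds (m.2.1 : E)) := by
      have h2 : Continuous (fun m : M => (m.2.1 : E)) :=
        continuous_subtype_val.comp continuous_snd
      have h3 := (h2.tendsto m).comp hlim
      have heq : (fun n => J (x n)) = (fun m : M => (m.2.1 : E)) ∘ u := by
        funext n; show J (x n) = ((u n).2 : E); rw [← hx n]
      rw [heq]; exact h3
    have hm2 : (m.2.1 : E) ∈ Set.range J := by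
      apply kurJ_closed_in_hull m.2.2
      exact mem_closure_of_tendsto hJlim (Filter.Eventually.of_forall fun n => ⟨x n, rfl⟩)
    obtain ⟨q, hq⟩ := hm2
    have hxq : Filter.Tendsto x Filter.atTop (nhds q) := by
      rw [tendsto_iff_dist_tendsto_zero]
      have : (fun n => dist (x n) q) = fun n => dist (J (x n)) (J q) := by
        funext n; rw [kurJ_isometry.dist_eq]
      rw [this]
      rw [hq]
      exact tendsto_iff_dist_tendsto_zero.1 hJlim
    have hfst : Filter.Tendsto (fun n => πP (x n)) Filter.atTop (nhds m.1) := by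
      have h3 := (continuous_fst.tendsto m).comp hlim
      have heq : (fun n => πP (x n)) = Prod.fst ∘ u := by
        funext n; show πP (x n) = (u n).1; rw [← hx n]
      rw [heq]; exact h3
    have hfst2 : Filter.Tendsto (fun n => πP (x n)) Filter.atTop (nhds (πP q)) :=
      (hP.2.1.tendsto q).comp hxq
    have hm1 : m.1 = πP q := tendsto_nhds_unique hfst hfst2
    refine ⟨q, ?_⟩
    rw [hi]
    exact Prod.ext hm1.symm (Subtype.ext hq)
  obtain ⟨U, hU, r, hrc, hrmem, hrfp, hrfix⟩ :=
    hP.2.2 M inferInstance inferInstance Prod.fst continuous_fst i hiclosed (fun y => rfl)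
  obtain ⟨O, hOopen, hOsub, hOU⟩ := mem_nhdsSet_iff_exists.1 hU
  set homeo := hiemb.toHomeomorph with hhomeo
  set ρ : ↥O → P := fun z => homeo.symm ⟨r ⟨z.1, hOU z.2⟩, hrmem _⟩ with hρ
  have hiρ : ∀ z : ↥O, i (ρ z) = r ⟨z.1, hOU z.2⟩ := by
    intro z
    have : i (homeo.symm ⟨r ⟨z.1, hOU z.2⟩, hrmem _⟩)
        = ((homeo (homeo.symm ⟨r ⟨z.1, hOU z.2⟩, hrmem _⟩)) : M) := rfl
    rw [hρ, this, Homeomorph.apply_symm_apply]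
  refine ⟨⟨E, J, kurJ_isometry, fun w hw hcl => kurJ_closed_in_hull hw hcl, O, hOopen,
    fun x => hOsub ⟨x, rfl⟩, ρ, ?_, ?_, ?_⟩⟩
  · refine homeo.symm.continuous.comp (Continuous.subtype_mk ?_ _)
    exact hrc.comp (Continuous.subtype_mk continuous_subtype_val _)
  · intro z
    have h1 : πP (ρ z) = (i (ρ z)).1 := rfl
    rw [h1, hiρ z]
    exact hrfp ⟨z.1, hOU z.2⟩
  · intro x h
    have h1 : i (ρ ⟨_, h⟩) = r ⟨i x, hOU h⟩ := hiρ ⟨_, h⟩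
    have h2 : r ⟨i x, hOU h⟩ = i x := hrfix _ ⟨x, rfl⟩
    exact hiemb.injective (by rw [h1, h2])

section FPBasics
variable {B0 Z P : Type u} [TopologicalSpace B0] [TopologicalSpace Z] [TopologicalSpace P]
  {πZ : Z → B0} {πP : P → B0}

lemma FPHomotopic.symm' {f g : Z → P} (h : FPHomotopic πZ πP f g) : FPHomotopic πZ πP g f := by
  obtain ⟨H, hc, h0, h1, hπ⟩ := h
  refine ⟨fun zt => H (zt.1, σ zt.2), ?_, ?_, ?_, fun z t => hπ z _⟩
  · exact hc.comp (continuous_fst.prodMk (continuous_symm.comp continuous_snd))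
  · intro z; show H (z, σ 0) = g z; rw [symm_zero]; exact h1 z
  · intro z; show H (z, σ 1) = f z; rw [symm_one]; exact h0 z

private lemma fpHomotopic_cont_left {f g : Z → P} (h : FPHomotopic πZ πP f g) :
    Continuous f := by
  obtain ⟨H, hc, h0, h1, hπ⟩ := h
  have : Continuous fun z => H (z, 0) := hc.comp (continuous_id.prodMk continuous_const)
  exact this.congr h0

/-- Convert an `FPHomotopic` statement into a `ContinuousMap.HomotopyWith`. -/
private lemma fpHomotopic_toHW {f g : Z → P} (hf : Continuous f) (hg : Continuous g)
    (h : FPHomotopic πZ πP f g) :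
    Nonempty (ContinuousMap.HomotopyWith ⟨f, hf⟩ ⟨g, hg⟩
      (fun u : C(Z, P) => ∀ z, πP (u z) = πZ z)) := by
  obtain ⟨H, hc, h0, h1, hπ⟩ := h
  refine ⟨⟨⟨⟨fun p => H (p.2, p.1), hc.comp (continuous_snd.prodMk continuous_fst)⟩,
    fun z => h0 z, fun z => h1 z⟩, fun t z => hπ z t⟩⟩

private lemma fpHomotopic_ofHW {f g : Z → P} (hf : Continuous f) (hg : Continuous g)
    (F : ContinuousMap.HomotopyWith ⟨f, hf⟩ ⟨g, hg⟩
      (fun u : C(Z, P) => ∀ z, πP (u z) = πZ z)) :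
    FPHomotopic πZ πP f g := by
  refine ⟨fun zt => F (zt.2, zt.1), F.continuous.comp (continuous_snd.prodMk continuous_fst),
    fun z => ?_, fun z => ?_, fun z t => ?_⟩
  · exact F.apply_zero z
  · exact F.apply_one z
  · have := F.prop t
    exact this z

lemma FPHomotopic.trans' {f g h : Z → P} (h1 : FPHomotopic πZ πP f g)
    (h2 : FPHomotopic πZ πP g h) : FPHomotopic πZ πP f h := by
  have hf := fpHomotopic_cont_left h1
  have hg := fpHomotopic_cont_left h2
  have hh := fpHomotopic_cont_left h2.symm'
  obtain ⟨F⟩ := fpHomotopic_toHW hf hg h1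
  obtain ⟨G⟩ := fpHomotopic_toHW hg hh h2
  exact fpHomotopic_ofHW hf hh (F.trans G)

end FPBasics

/-- For a compact fiber `K = I`, the set of points whose whole slice maps into an open set
is open. -/
lemma isOpen_forall_slice {Z Y : Type*} [TopologicalSpace Z] [TopologicalSpace Y]
    {F : Z × unitInterval → Y} (hF : Continuous F) {O : Set Y} (hO : IsOpen O) :
    IsOpen {z | ∀ t : unitInterval, F (z, t) ∈ O} := by
  rw [isOpen_iff_mem_nhds]
  intro z hz
  have hsub : ({z} ×ˢ (univ : Set unitInterval)) ⊆ F ⁻¹' O := by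
    rintro ⟨z', t⟩ ⟨hz', -⟩
    rcases hz' with rfl
    exact hz t
  obtain ⟨u, v, hu, hv, hzu, hvu, huv⟩ := generalized_tube_lemma isCompact_singleton
    isCompact_univ (hO.preimage hF) hsub
  refine Filter.mem_of_superset (hu.mem_nhds (hzu rfl)) ?_
  intro z' hz' t
  exact huv ⟨hz', hvu (mem_univ t)⟩

set_option synthInstance.maxHeartbeats 1000000 in
set_option maxHeartbeats 1000000 in
/-- For every fiber ANR `P` there is an open cover `𝒱` such that any two `𝒱`-near f.p. maps
into `P` are f.p. homotopic. -/
lemma nearHomotopyCover {B0 P : Type u} [TopologicalSpace B0] [MetrizableSpace B0]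
    [TopologicalSpace P] (πP : P → B0) (hP : IsFiberANR B0 P πP) :
    ∃ 𝒱 : Set (Set P), IsOpenCover 𝒱 ∧
      ∀ (Z : Type u) (_ : TopologicalSpace Z) (πZ : Z → B0) (f g : Z → P),
        IsFPMap πZ πP f → IsFPMap πZ πP g → UNear 𝒱 f g → FPHomotopic πZ πP f g := by
  classical
  by_cases hne : Nonempty P
  swap
  · -- P empty
    refine ⟨{univ}, ⟨fun V hV => by rw [mem_singleton_iff] at hV; rw [hV]; exact isOpen_univ,
      by simp⟩, ?_⟩
    intro Z _ πZ f g hf hg _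
    refine ⟨fun zt => f zt.1, hf.1.comp continuous_fst, fun z => rfl,
      fun z => (hne ⟨f z⟩).elim, fun z t => (hne ⟨f z⟩).elim⟩
  · haveI := hne
    haveI := hP.1
    letI : MetricSpace B0 := TopologicalSpace.metrizableSpaceMetric B0
    letI : MetricSpace P := TopologicalSpace.metrizableSpaceMetric P
    obtain ⟨M⟩ := exists_fibModel πP hP
    letI := M.ng; letI := M.ns
    set C : Set M.E := convexHull ℝ (Set.range M.J) with hC
    have hJC : ∀ x : P, M.J x ∈ C := fun x => subset_convexHull ℝ _ ⟨x, rfl⟩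
    -- choose radii
    have hball : ∀ q : P, ∃ ε > (0:ℝ),
        Metric.ball ((πP q, ⟨M.J q, hJC q⟩) : B0 × ↥C) ε ⊆ M.O := by
      intro q
      obtain ⟨ε, hε, hsub⟩ := Metric.isOpen_iff.1 M.openO _ (M.memO q)
      exact ⟨ε, hε, hsub⟩
    choose ε hεpos hεsub using hball
    set V : P → Set P := fun q =>
      {x | dist (M.J x) (M.J q) < ε q / 2 ∧ dist (πP x) (πP q) < ε q} with hV
    have hVopen : ∀ q, IsOpen (V q) := by
      intro q
      have h1 : IsOpen {x : P | dist (M.J x) (M.J q) < ε q / 2} := by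
        have : Continuous fun x : P => dist (M.J x) (M.J q) :=
          (M.isomJ.continuous.dist continuous_const)
        exact isOpen_lt this continuous_const
      have h2 : IsOpen {x : P | dist (πP x) (πP q) < ε q} := by
        have : Continuous fun x : P => dist (πP x) (πP q) := hP.2.1.dist continuous_const
        exact isOpen_lt this continuous_const
      exact h1.inter h2
    have hVmem : ∀ q, q ∈ V q := fun q => ⟨by simp [half_pos (hεpos q)], by simp [hεpos q]⟩
    refine ⟨Set.range V, ⟨by rintro W ⟨q, rfl⟩; exact hVopen q, ?_⟩, ?_⟩
    · apply eq_univ_iff_forall.2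
      intro x
      exact ⟨V x, ⟨x, rfl⟩, hVmem x⟩
    intro Z _ πZ f g hf hg hnear
    -- the straight-line homotopy in the convex hull, pushed down by the retraction
    set s : Z × unitInterval → M.E := fun zt =>
      ((σ zt.2 : ℝ)) • M.J (f zt.1) + ((zt.2 : ℝ)) • M.J (g zt.1) with hs
    have hscont : Continuous s := by
      apply Continuous.add
      · exact (continuous_subtype_val.comp (continuous_symm.comp continuous_snd)).smul
          (M.isomJ.continuous.comp (hf.1.comp continuous_fst))
      · exact (continuous_subtype_val.comp continuous_snd).smul
          (M.isomJ.continuous.comp (hg.1.comp continuous_fst))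
    have hsC : ∀ zt, s zt ∈ C := by
      intro zt
      apply (convex_convexHull ℝ _) (hJC (f zt.1)) (hJC (g zt.1))
      · rw [coe_symm_eq]; linarith [zt.2.2.2]
      · exact zt.2.2.1
      · rw [coe_symm_eq]; ring
    have hmemO : ∀ zt : Z × unitInterval,
        ((πP (f zt.1), ⟨s zt, hsC zt⟩) : B0 × ↥C) ∈ M.O := by
      rintro ⟨z, t⟩
      obtain ⟨W, ⟨q, rfl⟩, hfW, hgW⟩ := hnear z
      apply hεsub q
      rw [Metric.mem_ball, Prod.dist_eq]
      apply max_lt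
      · exact hfW.2
      · rw [Subtype.dist_eq]
        show dist (s (z, t)) (M.J q) < ε q
        have hJq : M.J q = ((σ t : ℝ)) • M.J q + ((t : ℝ)) • M.J q := by
          rw [← add_smul, coe_symm_eq]
          norm_num
        rw [dist_eq_norm, hJq]
        have hstep : s (z, t) - (((σ t : ℝ)) • M.J q + ((t : ℝ)) • M.J q)
            = ((σ t : ℝ)) • (M.J (f z) - M.J q) + ((t : ℝ)) • (M.J (g z) - M.J q) := by
          simp only [hs, smul_sub]
          abel
        rw [hstep]
        have hn1 : ‖((σ t : ℝ)) • (M.J (f z) - M.J q)‖ ≤ (σ t : ℝ) * (ε q / 2) := by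
          rw [norm_smul, Real.norm_of_nonneg (σ t).2.1]
          apply mul_le_mul_of_nonneg_left _ (σ t).2.1
          rw [← dist_eq_norm]
          exact le_of_lt hfW.1
        have hn2 : ‖((t : ℝ)) • (M.J (g z) - M.J q)‖ ≤ (t : ℝ) * (ε q / 2) := by
          rw [norm_smul, Real.norm_of_nonneg t.2.1]
          apply mul_le_mul_of_nonneg_left _ t.2.1
          rw [← dist_eq_norm]
          exact le_of_lt hgW.1
        calc ‖((σ t : ℝ)) • (M.J (f z) - M.J q) + ((t : ℝ)) • (M.J (g z) - M.J q)‖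
            ≤ ‖((σ t : ℝ)) • (M.J (f z) - M.J q)‖ + ‖((t : ℝ)) • (M.J (g z) - M.J q)‖ :=
              norm_add_le _ _
          _ ≤ (σ t : ℝ) * (ε q / 2) + (t : ℝ) * (ε q / 2) := add_le_add hn1 hn2
          _ = ε q / 2 := by rw [coe_symm_eq]; ring
          _ < ε q := by linarith [hεpos q]
    set H : Z × unitInterval → P := fun zt => M.ρ ⟨(πP (f zt.1), ⟨s zt, hsC zt⟩), hmemO zt⟩
      with hH
    have hJfC : ∀ z : Z, (⟨M.J (f z), hJC (f z)⟩ : ↥C) = ⟨s (z, 0), hsC (z, 0)⟩ := by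
      intro z
      apply Subtype.ext
      show M.J (f z) = s (z, 0)
      simp only [hs]
      rw [show ((0 : unitInterval) : ℝ) = (0:ℝ) from rfl, symm_zero]
      norm_num
    have hJgC : ∀ z : Z, (⟨M.J (g z), hJC (g z)⟩ : ↥C) = ⟨s (z, 1), hsC (z, 1)⟩ := by
      intro z
      apply Subtype.ext
      show M.J (g z) = s (z, 1)
      simp only [hs]
      rw [symm_one]
      rw [show ((1 : unitInterval) : ℝ) = (1:ℝ) from rfl,
        show (((0:unitInterval) : ℝ)) = (0:ℝ) from rfl]
      norm_num
    refine ⟨H, ?_, ?_, ?_, ?_⟩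
    · apply M.contρ.comp
      apply Continuous.subtype_mk
      exact (hP.2.1.comp (hf.1.comp continuous_fst)).prodMk (hscont.subtype_mk _)
    · intro z
      have h1 : (⟨(πP (f z), ⟨s (z,0), hsC (z,0)⟩), hmemO (z,0)⟩ : ↥M.O)
          = ⟨(πP (f z), ⟨M.J (f z), hJC (f z)⟩), by rw [hJfC z]; exact hmemO (z,0)⟩ := by
        apply Subtype.ext
        show ((πP (f z), ⟨s (z,0), hsC (z,0)⟩) : B0 × ↥C) = (πP (f z), ⟨M.J (f z), hJC (f z)⟩)
        rw [hJfC z]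
      show M.ρ _ = f z
      rw [h1]
      exact M.retρ (f z) _
    · intro z
      have hπfg : πP (f z) = πP (g z) := by rw [hf.2 z, hg.2 z]
      have h1 : (⟨(πP (f z), ⟨s (z,1), hsC (z,1)⟩), hmemO (z,1)⟩ : ↥M.O)
          = ⟨(πP (g z), ⟨M.J (g z), hJC (g z)⟩), by rw [hJgC z, ← hπfg]; exact hmemO (z,1)⟩ := by
        apply Subtype.ext
        show ((πP (f z), ⟨s (z,1), hsC (z,1)⟩) : B0 × ↥C) = (πP (g z), ⟨M.J (g z), hJC (g z)⟩)
        rw [hJgC z, hπfg]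
      show M.ρ _ = g z
      rw [h1]
      exact M.retρ (g z) _
    · intro z t
      have := M.fpρ ⟨(πP (f z), ⟨s (z,t), hsC (z,t)⟩), hmemO (z,t)⟩
      show πP (M.ρ _) = πZ z
      rw [this]
      exact hf.2 z

set_option synthInstance.maxHeartbeats 1000000 in
set_option maxHeartbeats 1000000 in
/-- Transfer lemma: a metrizable space over `B0` which sits as a closed fiberwise neighbourhood
retract inside `B0 × K` for a convex subset `K` of a normed space is a fiber ANR. -/
lemma isFiberANR_of_model {B0 Y : Type u} [TopologicalSpace B0] [TopologicalSpace Y]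
    [MetrizableSpace Y] (πY : Y → B0) (hπY : Continuous πY)
    (E : Type u) [NormedAddCommGroup E] [NormedSpace ℝ E] (K : Set E) (hK : Convex ℝ K)
    (e : Y → B0 × ↥K) (he : IsClosedEmbedding e) (hefp : ∀ y, (e y).1 = πY y)
    (O' : Set (B0 × ↥K)) (hO' : IsOpen O') (heO : Set.range e ⊆ O')
    (ρ' : ↥O' → B0 × ↥K) (hρc : Continuous ρ') (hρmem : ∀ z, ρ' z ∈ Set.range e)
    (hρfst : ∀ z : ↥O', (ρ' z).1 = z.1.1) (hρfix : ∀ z : ↥O', z.1 ∈ Set.range e → ρ' z = z.1) :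
    IsFiberANR B0 Y πY := by
  classical
  refine ⟨inferInstance, hπY, ?_⟩
  intro W tW mW πW hπW j hj hjfp
  haveI := mW
  letI : MetricSpace W := TopologicalSpace.metrizableSpaceMetric W
  by_cases hne : Nonempty Y
  swap
  · -- Y empty
    have hre : Set.range j = ∅ := by
      rw [range_eq_empty_iff]
      exact not_nonempty_iff.1 hne
    haveI : IsEmpty ↥(∅ : Set W) := ⟨fun u => (notMem_empty _ u.2)⟩
    refine ⟨∅, by rw [hre, nhdsSet_empty]; exact Filter.mem_bot, fun u => isEmptyElim u,
      ?_, fun u => isEmptyElim u, fun u => isEmptyElim u, fun u => isEmptyElim u⟩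
    constructor
    intro s _
    convert isOpen_empty
    exact eq_empty_iff_forall_notMem.2 fun u _ => isEmptyElim u
  · haveI := hne
    set A : Set W := Set.range j with hA
    have hAclosed : IsClosed A := hj.isClosed_range
    have hAne : A.Nonempty := ⟨j (Classical.arbitrary Y), mem_range_self _⟩
    set homj := hj.isEmbedding.toHomeomorph with hhomj
    set jinv : ↥A → Y := fun w => homj.symm w with hjinv
    have hjjinv : ∀ w : ↥A, j (jinv w) = w.1 := by
      intro w
      have : (homj (jinv w) : W) = w.1 := by rw [hjinv, Homeomorph.apply_symm_apply]
      exact this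
    set φ : ↥A → E := fun w => ((e (jinv w)).2 : E) with hφ
    have hφcont : Continuous φ :=
      continuous_subtype_val.comp (continuous_snd.comp (he.continuous.comp
        (homj.symm.continuous)))
    obtain ⟨ψ, hψc, hψa, hψm⟩ := dugundji_ext hAclosed hAne φ hφcont
    have hφK : Set.range φ ⊆ K := by
      rintro x ⟨w, rfl⟩
      exact (e (jinv w)).2.2
    have hψK : ∀ w, ψ w ∈ K := by
      intro w
      exact convexHull_min hφK hK (hψm w)
    set Φ : W → B0 × ↥K := fun w => (πW w, ⟨ψ w, hψK w⟩) with hΦ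
    have hΦc : Continuous Φ := hπW.prodMk (hψc.subtype_mk _)
    have hΦj : ∀ y : Y, Φ (j y) = e y := by
      intro y
      have h1 : jinv ⟨j y, mem_range_self y⟩ = y := by
        apply hj.isEmbedding.injective
        rw [hjjinv]
      refine Prod.ext ?_ (Subtype.ext ?_)
      · show πW (j y) = (e y).1
        rw [hjfp y, hefp y]
      · show ψ (j y) = ((e y).2 : E)
        have h2 := hψa ⟨j y, mem_range_self y⟩
        rw [h2, hφ]
        simp only []
        rw [h1]
    set V : Set W := Φ ⁻¹' O' with hVdef
    have hVopen : IsOpen V := hO'.preimage hΦc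
    have hAV : A ⊆ V := by
      rintro w ⟨y, rfl⟩
      show Φ (j y) ∈ O'
      rw [hΦj y]
      exact heO (mem_range_self y)
    set home := he.isEmbedding.toHomeomorph with hhome
    set einv : ↥(Set.range e) → Y := fun m => home.symm m with heinv
    have heeinv : ∀ m : ↥(Set.range e), e (einv m) = m.1 := by
      intro m
      have : (home (einv m) : B0 × ↥K) = m.1 := by rw [heinv, Homeomorph.apply_symm_apply]
      exact this
    set r : ↥V → W := fun v => j (einv ⟨ρ' ⟨Φ v.1, v.2⟩, hρmem _⟩) with hr
    refine ⟨V, hVopen.mem_nhdsSet.2 hAV, r, ?_, ?_, ?_, ?_⟩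
    · apply hj.continuous.comp
      apply home.symm.continuous.comp
      apply Continuous.subtype_mk
      exact hρc.comp (Continuous.subtype_mk (hΦc.comp continuous_subtype_val) _)
    · intro v
      exact mem_range_self _
    · intro v
      show πW (j _) = πW v.1
      rw [hjfp, ← hefp, heeinv]
      show (ρ' ⟨Φ v.1, v.2⟩).1 = πW v.1
      rw [hρfst]
    · rintro v hv
      obtain ⟨y, hy⟩ := hv
      have hΦv : Φ v.1 = e y := by rw [← hy, hΦj]
      have h1 : ρ' ⟨Φ v.1, v.2⟩ = Φ v.1 := by
        apply hρfix
        show Φ v.1 ∈ Set.range e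
        rw [hΦv]
        exact mem_range_self y
      show j (einv ⟨ρ' ⟨Φ v.1, v.2⟩, hρmem _⟩) = v.1
      have h2 : (⟨ρ' ⟨Φ v.1, v.2⟩, hρmem _⟩ : ↥(Set.range e))
          = ⟨e y, mem_range_self y⟩ := by
        apply Subtype.ext
        show ρ' ⟨Φ v.1, v.2⟩ = e y
        rw [h1, hΦv]
      rw [h2]
      have h3 : einv ⟨e y, mem_range_self y⟩ = y := by
        apply he.isEmbedding.injective
        rw [heeinv]
      rw [h3, hy]

set_option synthInstance.maxHeartbeats 1000000 in
set_option maxHeartbeats 4000000 in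
/-- The fiberwise path space of a nonempty fiber ANR is a fiber ANR. -/
lemma isFiberANR_pathSpace {B0 P : Type u} [TopologicalSpace B0] [MetrizableSpace B0]
    [TopologicalSpace P] [Nonempty P] (πP : P → B0) (hP : IsFiberANR B0 P πP) :
    IsFiberANR B0 {γ : C(unitInterval, P) // ∀ t, πP (γ t) = πP (γ 0)}
      (fun γ => πP (γ.1 0)) := by
  classical
  haveI := hP.1
  letI : MetricSpace B0 := TopologicalSpace.metrizableSpaceMetric B0
  letI : MetricSpace P := TopologicalSpace.metrizableSpaceMetric P
  obtain ⟨M⟩ := exists_fibModel πP hP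
  letI := M.ng; letI := M.ns
  set Q := {γ : C(unitInterval, P) // ∀ t, πP (γ t) = πP (γ 0)} with hQ
  set πQ : Q → B0 := fun γ => πP (γ.1 0) with hπQ
  have hπQc : Continuous πQ :=
    hP.2.1.comp ((continuous_eval_const (0 : unitInterval)).comp
      continuous_subtype_val)
  set C : Set M.E := convexHull ℝ (Set.range M.J) with hC
  have hJC : ∀ x : P, M.J x ∈ C := fun x => subset_convexHull ℝ _ ⟨x, rfl⟩
  set K : Set C(unitInterval, M.E) := {γ | ∀ t, γ t ∈ C} with hK
  have hKconv : Convex ℝ K := by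
    intro γ hγ δ hδ a b ha hb hab
    intro t
    show (a • γ + b • δ) t ∈ C
    have h2 : (a • γ + b • δ) t = a • γ t + b • δ t := by
      simp [ContinuousMap.add_apply, ContinuousMap.smul_apply]
    rw [h2]
    exact (convex_convexHull ℝ _) (hγ t) (hδ t) ha hb hab
  set Jc : C(P, M.E) := ⟨M.J, M.isomJ.continuous⟩ with hJc
  set e : Q → B0 × ↥K := fun q =>
    (πP (q.1 0), ⟨Jc.comp q.1, fun t => hJC (q.1 t)⟩) with he
  have hecont : Continuous e := by
    refine Continuous.prodMk hπQc (Continuous.subtype_mk ?_ _)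
    exact (ContinuousMap.continuous_postcomp Jc).comp continuous_subtype_val
  -- κ is an isometry
  set κ : C(unitInterval, P) → C(unitInterval, M.E) := fun γ => Jc.comp γ with hκ
  have hκisom : Isometry κ := by
    apply Isometry.of_dist_eq
    intro γ δ
    apply le_antisymm
    · refine (ContinuousMap.dist_le dist_nonneg).2 fun t => ?_
      show dist (M.J (γ t)) (M.J (δ t)) ≤ dist γ δ
      rw [M.isomJ.dist_eq]
      exact ContinuousMap.dist_apply_le_dist t
    · refine (ContinuousMap.dist_le dist_nonneg).2 fun t => ?_
      have : dist (γ t) (δ t) = dist (κ γ t) (κ δ t) := by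
        show dist (γ t) (δ t) = dist (M.J (γ t)) (M.J (δ t))
        rw [M.isomJ.dist_eq]
      rw [this]
      exact ContinuousMap.dist_apply_le_dist t
  have heemb : IsEmbedding e := by
    have h2 : Continuous (fun m : B0 × ↥K => (m.2.1 : C(unitInterval, M.E))) :=
      continuous_subtype_val.comp continuous_snd
    have h3 : IsEmbedding ((fun m : B0 × ↥K => (m.2.1 : C(unitInterval, M.E))) ∘ e) := by
      have : (fun m : B0 × ↥K => (m.2.1 : C(unitInterval, M.E))) ∘ e
          = κ ∘ (Subtype.val : Q → C(unitInterval, P)) := rfl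
      rw [this]
      exact (hκisom.comp isometry_subtype_coe).isEmbedding
    exact IsEmbedding.of_comp hecont h2 h3
  set homJ := M.isomJ.isEmbedding.toHomeomorph with hhomJ
  have hJsymm : ∀ m : ↥(Set.range M.J), M.J (homJ.symm m) = m.1 := by
    intro m
    have : (homJ (homJ.symm m) : M.E) = m.1 := by rw [Homeomorph.apply_symm_apply]
    exact this
  letI : MetricSpace (B0 × ↥K) := inferInstance
  haveI : SequentialSpace (B0 × ↥K) := inferInstance
  have heclosed : IsClosedEmbedding e := by
    refine ⟨heemb, ?_⟩
    apply IsSeqClosed.isClosed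
    rintro u m hmem hlim
    choose q hq using hmem
    have hJlim : Filter.Tendsto (fun n => κ (q n).1) Filter.atTop
        (nhds (m.2.1 : C(unitInterval, M.E))) := by
      have h2 : Continuous (fun m : B0 × ↥K => (m.2.1 : C(unitInterval, M.E))) :=
        continuous_subtype_val.comp continuous_snd
      have h3 := (h2.tendsto m).comp hlim
      have heq : (fun n => κ (q n).1)
          = (fun m : B0 × ↥K => (m.2.1 : C(unitInterval, M.E))) ∘ u := by
        funext n; show κ (q n).1 = ((u n).2 : C(unitInterval, M.E)); rw [← hq n]
      rw [heq]; exact h3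
    have hevlim : ∀ t, Filter.Tendsto (fun n => M.J ((q n).1 t)) Filter.atTop
        (nhds ((m.2.1 : C(unitInterval, M.E)) t)) := by
      intro t
      have h4 := ((continuous_eval_const t).tendsto _).comp hJlim
      exact h4
    have hmemJ : ∀ t, (m.2.1 : C(unitInterval, M.E)) t ∈ Set.range M.J := by
      intro t
      apply M.closedJ _ (m.2.2 t)
      exact mem_closure_of_tendsto (hevlim t)
        (Filter.Eventually.of_forall fun n => ⟨(q n).1 t, rfl⟩)
    set gLim : C(unitInterval, P) :=
      ⟨fun t => homJ.symm ⟨(m.2.1 : C(unitInterval, M.E)) t, hmemJ t⟩,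
        homJ.symm.continuous.comp ((m.2.1 : C(unitInterval, M.E)).continuous.subtype_mk _)⟩
      with hgLim
    have hJgLim : ∀ t, M.J (gLim t) = (m.2.1 : C(unitInterval, M.E)) t := by
      intro t
      exact hJsymm _
    have hptlim : ∀ t, Filter.Tendsto (fun n => (q n).1 t) Filter.atTop (nhds (gLim t)) := by
      intro t
      rw [tendsto_iff_dist_tendsto_zero]
      have heq2 : (fun n => dist ((q n).1 t) (gLim t))
          = fun n => dist (M.J ((q n).1 t)) ((m.2.1 : C(unitInterval, M.E)) t) := by
        funext n
        rw [← M.isomJ.dist_eq, hJgLim t]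
      rw [heq2]
      exact tendsto_iff_dist_tendsto_zero.1 (hevlim t)
    have hfib : ∀ t, πP (gLim t) = πP (gLim 0) := by
      intro t
      have h5 : Filter.Tendsto (fun n => πP ((q n).1 t)) Filter.atTop (nhds (πP (gLim t))) :=
        (hP.2.1.tendsto _).comp (hptlim t)
      have h6 : Filter.Tendsto (fun n => πP ((q n).1 t)) Filter.atTop (nhds (πP (gLim 0))) := by
        have heq3 : (fun n => πP ((q n).1 t)) = fun n => πP ((q n).1 0) := by
          funext n; exact (q n).2 t
        rw [heq3]
        exact (hP.2.1.tendsto _).comp (hptlim 0)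
      exact tendsto_nhds_unique h5 h6
    have hb : m.1 = πP (gLim 0) := by
      have h7 : Filter.Tendsto (fun n => πP ((q n).1 0)) Filter.atTop (nhds m.1) := by
        have h8 := (continuous_fst.tendsto m).comp hlim
        have heq4 : (fun n => πP ((q n).1 0)) = Prod.fst ∘ u := by
          funext n; show πP ((q n).1 0) = (u n).1; rw [← hq n]
        rw [heq4]; exact h8
      exact tendsto_nhds_unique h7 ((hP.2.1.tendsto _).comp (hptlim 0))
    refine ⟨⟨gLim, hfib⟩, ?_⟩
    refine Prod.ext hb.symm (Subtype.ext (ContinuousMap.ext fun t => ?_))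
    show M.J (gLim t) = _
    exact hJgLim t
  -- the tube neighbourhood and the fiberwise retraction on it
  set O'' : Set (B0 × ↥K) :=
    {z | ∀ t : unitInterval, ((z.1, ⟨z.2.1 t, z.2.2 t⟩) : B0 × ↥C) ∈ M.O} with hO''
  have hO''open : IsOpen O'' := by
    have hF : Continuous (fun p : (B0 × ↥K) × unitInterval =>
        ((p.1.1, ⟨p.1.2.1 p.2, p.1.2.2 p.2⟩) : B0 × ↥C)) := by
      refine Continuous.prodMk (continuous_fst.fst) (Continuous.subtype_mk ?_ _)
      exact continuous_eval.comp
        ((continuous_subtype_val.comp (continuous_snd.comp continuous_fst)).prodMk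
          continuous_snd)
    exact isOpen_forall_slice hF M.openO
  have heO'' : Set.range e ⊆ O'' := by
    rintro z ⟨γ, rfl⟩
    intro t
    have h9 : ((πP (γ.1 0), ⟨(Jc.comp γ.1) t, (e γ).2.2 t⟩) : B0 × ↥C)
        = ((πP (γ.1 t), ⟨M.J (γ.1 t), hJC (γ.1 t)⟩) : B0 × ↥C) := by
      refine Prod.ext ?_ (Subtype.ext rfl)
      · show πP (γ.1 0) = πP (γ.1 t)
        exact (γ.2 t).symm
    show ((πP (γ.1 0), ⟨(Jc.comp γ.1) t, _⟩) : B0 × ↥C) ∈ M.O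
    rw [h9]
    exact M.memO (γ.1 t)
  set Fρ : C(↥O'' × unitInterval, P) :=
    ⟨fun p => M.ρ ⟨(p.1.1.1, ⟨p.1.1.2.1 p.2, p.1.1.2.2 p.2⟩), p.1.2 p.2⟩, by
      apply M.contρ.comp
      apply Continuous.subtype_mk
      refine Continuous.prodMk (continuous_fst.comp (continuous_subtype_val.comp
        continuous_fst)) (Continuous.subtype_mk ?_ _)
      exact continuous_eval.comp
        ((continuous_subtype_val.comp (continuous_snd.comp (continuous_subtype_val.comp
          continuous_fst))).prodMk continuous_snd)⟩ with hFρ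
  set pathρ : ↥O'' → C(unitInterval, P) := fun z => Fρ.curry z with hpathρ
  have hpathfp : ∀ (z : ↥O'') (t : unitInterval), πP (pathρ z t) = z.1.1 := by
    intro z t
    show πP (M.ρ _) = z.1.1
    rw [M.fpρ]
  set ρ'' : ↥O'' → B0 × ↥K := fun z =>
    (z.1.1, ⟨Jc.comp (pathρ z), fun t => hJC (pathρ z t)⟩) with hρ''
  have hρ''c : Continuous ρ'' := by
    refine Continuous.prodMk (continuous_fst.comp continuous_subtype_val)
      (Continuous.subtype_mk ?_ _)
    exact (ContinuousMap.continuous_postcomp Jc).comp Fρ.curry.continuous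
  have hρ''mem : ∀ z, ρ'' z ∈ Set.range e := by
    intro z
    refine ⟨⟨pathρ z, fun t => by rw [hpathfp z t, hpathfp z 0]⟩, ?_⟩
    refine Prod.ext ?_ (Subtype.ext rfl)
    · show πP (pathρ z 0) = z.1.1
      exact hpathfp z 0
  have hρ''fst : ∀ z : ↥O'', (ρ'' z).1 = z.1.1 := fun z => rfl
  have hρ''fix : ∀ z : ↥O'', z.1 ∈ Set.range e → ρ'' z = z.1 := by
    rintro z ⟨γ, hγ⟩
    have hz1 : z.1.1 = πP (γ.1 0) := by rw [← hγ]
    have hz2 : ∀ t, z.1.2.1 t = M.J (γ.1 t) := by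
      intro t; rw [← hγ]; rfl
    have hpath : ∀ t, pathρ z t = γ.1 t := by
      intro t
      show M.ρ ⟨(z.1.1, ⟨z.1.2.1 t, z.1.2.2 t⟩), z.2 t⟩ = γ.1 t
      have harg : (⟨(z.1.1, ⟨z.1.2.1 t, z.1.2.2 t⟩), z.2 t⟩ : ↥M.O)
          = ⟨(πP (γ.1 t), ⟨M.J (γ.1 t), hJC (γ.1 t)⟩), M.memO (γ.1 t)⟩ := by
        apply Subtype.ext
        refine Prod.ext ?_ (Subtype.ext (hz2 t))
        show z.1.1 = πP (γ.1 t)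
        rw [hz1]
        exact (γ.2 t).symm
      rw [harg]
      exact M.retρ (γ.1 t) _
    rw [← hγ]
    refine Prod.ext ?_ (Subtype.ext (ContinuousMap.ext fun t => ?_))
    · show z.1.1 = πP (γ.1 0)
      exact hz1
    · show M.J (pathρ z t) = M.J (γ.1 t)
      rw [hpath t]
  haveI : MetrizableSpace Q := inferInstance
  exact isFiberANR_of_model πQ hπQc C(unitInterval, M.E) K hKconv e heclosed (fun q => rfl)
    O'' hO''open heO'' ρ'' hρ''c hρ''mem hρ''fst hρ''fix
/-- Corollary 1.6: every `ANR_{B0}`-resolution over `B0` is an `ANR_{B0}`-expansion, i.e. it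
satisfies conditions (E1) and (E2). -/
theorem fibANRResolution_isExpansion (B0 : Type u) [TopologicalSpace B0] [MetrizableSpace B0]
    (X : Type u) [TopologicalSpace X] (πX : X → B0) (hπX : Continuous πX)
    (S : FibInvSys B0) (p : FibMapToSys X πX S)
    (hANR : ∀ a : S.Idx, IsFiberANR B0 (S.obj a) (S.proj a))
    (hres : IsFibResolution X πX S p) :
    CondE1 X πX S p ∧ CondE2 X πX S p := by
  constructor
  · -- (E1)
    intro P tP πP hPanr f hf
    obtain ⟨𝒱₀, hcov₀, hA⟩ := nearHomotopyCover πP hPanr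
    obtain ⟨a, h, hhfp, hnear⟩ := hres.1 P tP πP hPanr 𝒱₀ hcov₀ f hf
    refine ⟨a, h, hhfp, ?_⟩
    have hfpcomp : IsFPMap πX πP (fun x => h (p.maps a x)) :=
      ⟨hhfp.1.comp (p.cont a), fun x => (hhfp.2 _).trans (p.fp a x)⟩
    exact hA X inferInstance πX (fun x => h (p.maps a x)) f hfpcomp hf
      (fun x => let ⟨V, hV, h1, h2⟩ := hnear x; ⟨V, hV, h2, h1⟩)
  · -- (E2)
    intro P tP πP hPanr a f f' hf hf' hhom
    letI := tP
    by_cases hPe : Nonempty P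
    swap
    · refine ⟨a, S.le_refl a, fun zt => f (S.bond a a (S.le_refl a) zt.1),
        hf.1.comp ((S.bond_cont a a _).comp continuous_fst),
        fun z => (hPe ⟨f (S.bond a a (S.le_refl a) z)⟩).elim,
        fun z => (hPe ⟨f (S.bond a a (S.le_refl a) z)⟩).elim,
        fun z t => (hPe ⟨f (S.bond a a (S.le_refl a) z)⟩).elim⟩
    haveI := hPe
    obtain ⟨𝒱₀, hcov₀, hA⟩ := nearHomotopyCover πP hPanr
    obtain ⟨𝒱', hcov', hR2⟩ := hres.2 P tP πP hPanr 𝒱₀ hcov₀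
    have hQanr := isFiberANR_pathSpace πP hPanr
    set Q := {γ : C(unitInterval, P) // ∀ t, πP (γ t) = πP (γ 0)} with hQdef
    set πQ : Q → B0 := fun γ => πP (γ.1 0) with hπQdef
    -- an open cover of the fiberwise path space controlling both endpoints
    set 𝒲 : Set (Set Q) :=
      {s | ∃ V₁ ∈ 𝒱', ∃ V₂ ∈ 𝒱', s = {γ : Q | γ.1 0 ∈ V₁ ∧ γ.1 1 ∈ V₂}} with h𝒲def
    have hev0 : Continuous fun γ : Q => γ.1 0 :=
      (continuous_eval_const 0).comp continuous_subtype_val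
    have hev1 : Continuous fun γ : Q => γ.1 1 :=
      (continuous_eval_const 1).comp continuous_subtype_val
    have hcov𝒲 : IsOpenCover 𝒲 := by
      constructor
      · rintro s ⟨V₁, hV₁, V₂, hV₂, rfl⟩
        exact ((hcov'.1 V₁ hV₁).preimage hev0).inter ((hcov'.1 V₂ hV₂).preimage hev1)
      · apply eq_univ_iff_forall.2
        intro γ
        have m0 : γ.1 0 ∈ ⋃₀ 𝒱' := by rw [hcov'.2]; trivial
        have m1 : γ.1 1 ∈ ⋃₀ 𝒱' := by rw [hcov'.2]; trivial
        obtain ⟨V₁, hV₁, hm0⟩ := m0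
        obtain ⟨V₂, hV₂, hm1⟩ := m1
        exact ⟨_, ⟨V₁, hV₁, V₂, hV₂, rfl⟩, hm0, hm1⟩
    obtain ⟨H, hHc, hH0, hH1, hHπ⟩ := hhom
    set Hc : C(X × unitInterval, P) := ⟨H, hHc⟩ with hHcdef
    have hcurry : ∀ x t, (Hc.curry x) t = H (x, t) := fun x t => rfl
    set Ht : X → Q := fun x => ⟨Hc.curry x, fun t => by
      rw [hcurry x t, hcurry x 0, hHπ x t, hHπ x 0]⟩ with hHtdef
    have hHtfp : IsFPMap πX πQ Ht := by
      refine ⟨Continuous.subtype_mk Hc.curry.continuous _, fun x => ?_⟩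
      show πP ((Hc.curry x) 0) = πX x
      rw [hcurry x 0]
      exact hHπ x 0
    obtain ⟨a₁, G, hGfp, hGnear⟩ := hres.1 Q inferInstance πQ hQanr 𝒲 hcov𝒲 Ht hHtfp
    obtain ⟨a₂, haa₂, ha₁a₂⟩ := S.directed a a₁
    set g0 : S.obj a₂ → P := fun y => (G (S.bond a₁ a₂ ha₁a₂ y)).1 0 with hg0def
    set g1 : S.obj a₂ → P := fun y => (G (S.bond a₁ a₂ ha₁a₂ y)).1 1 with hg1def
    set f₂ : S.obj a₂ → P := fun y => f (S.bond a a₂ haa₂ y) with hf₂def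
    set f₂' : S.obj a₂ → P := fun y => f' (S.bond a a₂ haa₂ y) with hf₂'def
    have hg0fp : IsFPMap (S.proj a₂) πP g0 :=
      ⟨(hev0.comp (hGfp.1.comp (S.bond_cont a₁ a₂ ha₁a₂))),
        fun y => (hGfp.2 _).trans (S.bond_fp a₁ a₂ ha₁a₂ y)⟩
    have hg1fp : IsFPMap (S.proj a₂) πP g1 := by
      refine ⟨(hev1.comp (hGfp.1.comp (S.bond_cont a₁ a₂ ha₁a₂))), fun y => ?_⟩
      show πP ((G (S.bond a₁ a₂ ha₁a₂ y)).1 1) = S.proj a₂ y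
      rw [(G (S.bond a₁ a₂ ha₁a₂ y)).2 1]
      exact (hGfp.2 _).trans (S.bond_fp a₁ a₂ ha₁a₂ y)
    have hf₂fp : IsFPMap (S.proj a₂) πP f₂ :=
      ⟨hf.1.comp (S.bond_cont a a₂ haa₂), fun y => (hf.2 _).trans (S.bond_fp a a₂ haa₂ y)⟩
    have hf₂'fp : IsFPMap (S.proj a₂) πP f₂' :=
      ⟨hf'.1.comp (S.bond_cont a a₂ haa₂), fun y => (hf'.2 _).trans (S.bond_fp a a₂ haa₂ y)⟩
    have hHt0 : ∀ x, (Ht x).1 0 = f (p.maps a x) := fun x => by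
      show (Hc.curry x) 0 = _
      rw [hcurry x 0]
      exact hH0 x
    have hHt1 : ∀ x, (Ht x).1 1 = f' (p.maps a x) := fun x => by
      show (Hc.curry x) 1 = _
      rw [hcurry x 1]
      exact hH1 x
    have hnear0 : UNear 𝒱' (fun x => f₂ (p.maps a₂ x)) (fun x => g0 (p.maps a₂ x)) := by
      intro x
      obtain ⟨s, ⟨V₁, hV₁, V₂, hV₂, rfl⟩, hHs, hGs⟩ := hGnear x
      refine ⟨V₁, hV₁, ?_, ?_⟩
      · show f (S.bond a a₂ haa₂ (p.maps a₂ x)) ∈ V₁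
        rw [p.comm a a₂ haa₂ x, ← hHt0 x]
        exact hHs.1
      · show (G (S.bond a₁ a₂ ha₁a₂ (p.maps a₂ x))).1 0 ∈ V₁
        rw [p.comm a₁ a₂ ha₁a₂ x]
        exact hGs.1
    have hnear1 : UNear 𝒱' (fun x => f₂' (p.maps a₂ x)) (fun x => g1 (p.maps a₂ x)) := by
      intro x
      obtain ⟨s, ⟨V₁, hV₁, V₂, hV₂, rfl⟩, hHs, hGs⟩ := hGnear x
      refine ⟨V₂, hV₂, ?_, ?_⟩
      · show f' (S.bond a a₂ haa₂ (p.maps a₂ x)) ∈ V₂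
        rw [p.comm a a₂ haa₂ x, ← hHt1 x]
        exact hHs.2
      · show (G (S.bond a₁ a₂ ha₁a₂ (p.maps a₂ x))).1 1 ∈ V₂
        rw [p.comm a₁ a₂ ha₁a₂ x]
        exact hGs.2
    obtain ⟨a₃, ha₂a₃, hnear₀'⟩ := hR2 a₂ f₂ g0 hf₂fp hg0fp hnear0
    obtain ⟨a₄, ha₂a₄, hnear₁'⟩ := hR2 a₂ f₂' g1 hf₂'fp hg1fp hnear1
    obtain ⟨a', ha₃a', ha₄a'⟩ := S.directed a₃ a₄
    have ha₂a' : S.le a₂ a' := S.le_trans _ _ _ ha₂a₃ ha₃a'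
    have haa' : S.le a a' := S.le_trans _ _ _ haa₂ ha₂a'
    have ha₁a' : S.le a₁ a' := S.le_trans _ _ _ ha₁a₂ ha₂a'
    refine ⟨a', haa', ?_⟩
    set F0 : S.obj a' → P := fun y => f (S.bond a a' haa' y) with hF0def
    set F1 : S.obj a' → P := fun y => f' (S.bond a a' haa' y) with hF1def
    set G0 : S.obj a' → P := fun y => (G (S.bond a₁ a' ha₁a' y)).1 0 with hG0def
    set G1 : S.obj a' → P := fun y => (G (S.bond a₁ a' ha₁a' y)).1 1 with hG1def
    have hF0fp : IsFPMap (S.proj a') πP F0 :=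
      ⟨hf.1.comp (S.bond_cont a a' haa'), fun y => (hf.2 _).trans (S.bond_fp a a' haa' y)⟩
    have hF1fp : IsFPMap (S.proj a') πP F1 :=
      ⟨hf'.1.comp (S.bond_cont a a' haa'), fun y => (hf'.2 _).trans (S.bond_fp a a' haa' y)⟩
    have hG0fp : IsFPMap (S.proj a') πP G0 :=
      ⟨hev0.comp (hGfp.1.comp (S.bond_cont a₁ a' ha₁a')),
        fun y => (hGfp.2 _).trans (S.bond_fp a₁ a' ha₁a' y)⟩
    have hG1fp : IsFPMap (S.proj a') πP G1 := by
      refine ⟨hev1.comp (hGfp.1.comp (S.bond_cont a₁ a' ha₁a')), fun y => ?_⟩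
      show πP ((G (S.bond a₁ a' ha₁a' y)).1 1) = S.proj a' y
      rw [(G (S.bond a₁ a' ha₁a' y)).2 1]
      exact (hGfp.2 _).trans (S.bond_fp a₁ a' ha₁a' y)
    have hn0 : UNear 𝒱₀ F0 G0 := by
      intro y
      obtain ⟨V, hV, h1, h2⟩ := hnear₀' (S.bond a₃ a' ha₃a' y)
      refine ⟨V, hV, ?_, ?_⟩
      · show f (S.bond a a' haa' y) ∈ V
        have e1 : f₂ (S.bond a₂ a₃ ha₂a₃ (S.bond a₃ a' ha₃a' y)) = f (S.bond a a' haa' y) := by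
          show f (S.bond a a₂ haa₂ (S.bond a₂ a₃ ha₂a₃ (S.bond a₃ a' ha₃a' y))) = _
          rw [S.bond_comp, S.bond_comp]
        rw [← e1]
        exact h1
      · show (G (S.bond a₁ a' ha₁a' y)).1 0 ∈ V
        have e2 : g0 (S.bond a₂ a₃ ha₂a₃ (S.bond a₃ a' ha₃a' y))
            = (G (S.bond a₁ a' ha₁a' y)).1 0 := by
          show (G (S.bond a₁ a₂ ha₁a₂ (S.bond a₂ a₃ ha₂a₃ (S.bond a₃ a' ha₃a' y)))).1 0 = _
          rw [S.bond_comp, S.bond_comp]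
        rw [← e2]
        exact h2
    have hn1 : UNear 𝒱₀ F1 G1 := by
      intro y
      obtain ⟨V, hV, h1, h2⟩ := hnear₁' (S.bond a₄ a' ha₄a' y)
      refine ⟨V, hV, ?_, ?_⟩
      · show f' (S.bond a a' haa' y) ∈ V
        have e1 : f₂' (S.bond a₂ a₄ ha₂a₄ (S.bond a₄ a' ha₄a' y)) = f' (S.bond a a' haa' y) := by
          show f' (S.bond a a₂ haa₂ (S.bond a₂ a₄ ha₂a₄ (S.bond a₄ a' ha₄a' y))) = _
          rw [S.bond_comp, S.bond_comp]
        rw [← e1]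
        exact h1
      · show (G (S.bond a₁ a' ha₁a' y)).1 1 ∈ V
        have e2 : g1 (S.bond a₂ a₄ ha₂a₄ (S.bond a₄ a' ha₄a' y))
            = (G (S.bond a₁ a' ha₁a' y)).1 1 := by
          show (G (S.bond a₁ a₂ ha₁a₂ (S.bond a₂ a₄ ha₂a₄ (S.bond a₄ a' ha₄a' y)))).1 1 = _
          rw [S.bond_comp, S.bond_comp]
        rw [← e2]
        exact h2
    have hh1 : FPHomotopic (S.proj a') πP F0 G0 :=
      hA (S.obj a') inferInstance (S.proj a') F0 G0 hF0fp hG0fp hn0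
    have hh3 : FPHomotopic (S.proj a') πP F1 G1 :=
      hA (S.obj a') inferInstance (S.proj a') F1 G1 hF1fp hG1fp hn1
    have hh2 : FPHomotopic (S.proj a') πP G0 G1 := by
      refine ⟨fun yt => (G (S.bond a₁ a' ha₁a' yt.1)).1 yt.2, ?_, fun y => rfl, fun y => rfl, ?_⟩
      · exact continuous_eval.comp
          (((continuous_subtype_val.comp (hGfp.1.comp (S.bond_cont a₁ a' ha₁a'))).comp
            continuous_fst).prodMk continuous_snd)
      · intro y t
        show πP ((G (S.bond a₁ a' ha₁a' y)).1 t) = S.proj a' y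
        rw [(G (S.bond a₁ a' ha₁a' y)).2 t]
        exact (hGfp.2 _).trans (S.bond_fp a₁ a' ha₁a' y)
    exact (hh1.trans' hh2).trans' hh3.symm'
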